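/- (Theorem 3.2 (iii), Jacobian of the absolute value) Under the Haar-type hypotheses, let û : Fin n → ℝ be such that every diagonal entry of D(û) is nonzero. Then the map α ↦ H · |D(α)| · Hᵀ e₀ (entrywise absolute value of the diagonal of D(α)) is Fréchet differentiable at û and its derivative is the linear map represented by the matrix H · sgn(D(û)) · Hᵀ. -/

import Mathlib

open Matrix

theorem haar_sg_abs_jacobian {n : ℕ} [NeZero n]
    (M : Fin n → Matrix (Fin n) (Fin n) ℝ)
    (hMsymm : ∀ k, (M k).IsSymm) (hM0 : M 0 = 1)
    (P : (Fin n → ℝ) → Matrix (Fin n) (Fin n) ℝ)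
    (hP : ∀ uh, P uh = ∑ k, uh k • M k)
    (hsym : ∀ uh wh : Fin n → ℝ, (P uh).mulVec wh = (P wh).mulVec uh)
    (e0 : Fin n → ℝ) (he0 : e0 = Pi.single 0 1)
    (H : Matrix (Fin n) (Fin n) ℝ) (hH : Hᵀ * H = 1)
    (hdiag : ∀ k, (Hᵀ * M k * H).IsDiag)
    (uh : Fin n → ℝ) (huh : ∀ i, (Hᵀ * P uh * H) i i ≠ 0) :
    HasFDerivAt
      (fun α : Fin n → ℝ =>
        (H * Matrix.diagonal (fun i => |(Hᵀ * P α * H) i i|) * Hᵀ).mulVec e0)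
      (LinearMap.toContinuousLinearMap
        (Matrix.mulVecLin
          (H * Matrix.diagonal
            (fun i => Real.sign ((Hᵀ * P uh * H) i i)) * Hᵀ)))
      uh := by
  have hHH : H * Hᵀ = 1 := mul_eq_one_comm.mp hH
  -- linearity of the entries in α
  have hlin : ∀ (α : Fin n → ℝ) (i j : Fin n),
      (Hᵀ * P α * H) i j = ∑ k, α k * (Hᵀ * M k * H) i j := by
    intro α i j
    rw [hP, Finset.mul_sum, Finset.sum_mul]
    simp [Matrix.sum_apply, Matrix.mul_smul, Matrix.smul_mul]
  -- P e0 = 1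
  have hPe0 : P e0 = 1 := by
    rw [hP, he0]
    have hterm : ∀ k : Fin n, (Pi.single (0:Fin n) (1:ℝ) : Fin n → ℝ) k • M k
        = if k = 0 then M 0 else 0 := by
      intro k; by_cases hk : k = 0 <;> simp [hk, Pi.single_apply]
    simp only [hterm, Finset.sum_ite_eq', Finset.mem_univ, if_true, hM0]
  have hPv : ∀ v : Fin n → ℝ, (P v).mulVec e0 = v := by
    intro v
    rw [hsym, hPe0, Matrix.one_mulVec]
  -- Hᵀ P v H is diagonal
  have hDdiag : ∀ v : Fin n → ℝ, (Hᵀ * P v * H).IsDiag := by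
    intro v i j hij
    rw [hlin]
    exact Finset.sum_eq_zero fun k _ => by rw [hdiag k hij, mul_zero]
  have hdm : ∀ (d w : Fin n → ℝ) (i : Fin n),
      ((Matrix.diagonal d).mulVec w) i = d i * w i := by
    intro d w i
    simp [Matrix.mulVec, dotProduct, Matrix.diagonal_apply, ite_mul,
      zero_mul, Finset.sum_ite_eq, Finset.mem_univ]
  have he0h : ∀ i : Fin n, (Hᵀ.mulVec e0) i = H 0 i := by
    intro i
    simp [Matrix.mulVec, dotProduct, he0, Pi.single_apply, mul_ite,
      mul_zero, mul_one, Finset.sum_ite_eq', Finset.mem_univ,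
      Matrix.transpose_apply]
  -- key identity
  have hkey : ∀ (v : Fin n → ℝ) (i : Fin n),
      Hᵀ.mulVec v i = (Hᵀ * P v * H) i i * H 0 i := by
    intro v i
    have h2 : Hᵀ * P v = (Hᵀ * P v * H) * Hᵀ := by
      rw [Matrix.mul_assoc (Hᵀ * P v), hHH, Matrix.mul_one]
    conv_lhs => rw [← hPv v, Matrix.mulVec_mulVec, h2, ← (hDdiag v).diagonal_diag,
      ← Matrix.mulVec_mulVec]
    rw [hdm, he0h]
    rfl
  -- value formula
  have hform : ∀ (g : Fin n → ℝ) (j : Fin n),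
      (H * Matrix.diagonal g * Hᵀ).mulVec e0 j = ∑ i, H j i * H 0 i * g i := by
    intro g j
    rw [he0]
    simp only [Matrix.mulVec, dotProduct, Pi.single_apply, Matrix.mul_apply,
      Matrix.diagonal_apply, Matrix.transpose_apply, mul_ite, mul_zero, ite_mul,
      zero_mul, mul_one, Finset.sum_ite_eq, Finset.sum_ite_eq', Finset.mem_univ,
      if_true]
    exact Finset.sum_congr rfl fun i _ => by ring
  -- sign coercion
  have hsgn : ∀ x : ℝ, x ≠ 0 → (SignType.sign x : ℝ) = Real.sign x := by
    intro x hx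
    rcases lt_trichotomy x 0 with h | h | h
    · simp [Real.sign_of_neg h, sign_neg h]
    · exact absurd h hx
    · simp [Real.sign_of_pos h, sign_pos h]
  -- derivative of each coordinate map α ↦ (Hᵀ P α H) i i
  have hd : ∀ i : Fin n, HasFDerivAt (fun α : Fin n → ℝ => (Hᵀ * P α * H) i i)
      (∑ k, (Hᵀ * M k * H) i i •
        (ContinuousLinearMap.proj k : (Fin n → ℝ) →L[ℝ] ℝ)) uh := by
    intro i
    have hfe : (fun α : Fin n → ℝ => (Hᵀ * P α * H) i i)
        = fun α => ∑ k, α k * (Hᵀ * M k * H) i i := funext fun α => hlin α i i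
    rw [hfe]
    exact HasFDerivAt.fun_sum fun k _ =>
      (ContinuousLinearMap.proj (R := ℝ) (φ := fun _ : Fin n => ℝ)
        k).hasFDerivAt.mul_const _
  apply hasFDerivAt_pi''
  intro j
  have hDj : HasFDerivAt
      (fun α : Fin n → ℝ => ∑ i, H j i * H 0 i * |(Hᵀ * P α * H) i i|)
      (∑ i, (H j i * H 0 i) • ((Real.sign ((Hᵀ * P uh * H) i i)) •
        (∑ k, (Hᵀ * M k * H) i i •
          (ContinuousLinearMap.proj k : (Fin n → ℝ) →L[ℝ] ℝ)))) uh := by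
    refine HasFDerivAt.fun_sum fun i _ => HasFDerivAt.const_mul ?_ _
    have habs := (hasDerivAt_abs (huh i)).comp_hasFDerivAt uh (hd i)
    rwa [hsgn _ (huh i)] at habs
  have heq : ((ContinuousLinearMap.proj j).comp
        (LinearMap.toContinuousLinearMap
          (Matrix.mulVecLin (H * Matrix.diagonal
            (fun i => Real.sign ((Hᵀ * P uh * H) i i)) * Hᵀ))))
      = (∑ i, (H j i * H 0 i) • ((Real.sign ((Hᵀ * P uh * H) i i)) •
        (∑ k, (Hᵀ * M k * H) i i •
          (ContinuousLinearMap.proj k : (Fin n → ℝ) →L[ℝ] ℝ)))) := by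
    ext v
    simp only [ContinuousLinearMap.comp_apply, ContinuousLinearMap.proj_apply,
      LinearMap.coe_toContinuousLinearMap', Matrix.mulVecLin_apply,
      ContinuousLinearMap.coe_sum', Finset.sum_apply,
      ContinuousLinearMap.coe_smul', Pi.smul_apply, smul_eq_mul]
    calc (H * Matrix.diagonal (fun i => Real.sign ((Hᵀ * P uh * H) i i)) * Hᵀ).mulVec v j
        = ∑ i, H j i * Real.sign ((Hᵀ * P uh * H) i i) * Hᵀ.mulVec v i := by
          rw [← Matrix.mulVec_mulVec, ← Matrix.mulVec_mulVec]
          show ∑ i, H j i * ((Matrix.diagonal (fun i => Real.sign ((Hᵀ * P uh * H) i i))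
            *ᵥ (Hᵀ *ᵥ v)) i) = _
          refine Finset.sum_congr rfl fun i _ => ?_
          rw [hdm]; ring
      _ = ∑ i, H j i * H 0 i * (Real.sign ((Hᵀ * P uh * H) i i) * (Hᵀ * P v * H) i i) := by
          refine Finset.sum_congr rfl fun i _ => ?_
          rw [hkey v i]; ring
      _ = ∑ i, H j i * H 0 i * (Real.sign ((Hᵀ * P uh * H) i i) *
            ∑ k, (Hᵀ * M k * H) i i * v k) := by
          refine Finset.sum_congr rfl fun i _ => ?_
          rw [hlin v i i]
          congr 1
          congr 1
          exact Finset.sum_congr rfl fun k _ => by ring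
  rw [heq]
  simpa only [hform] using hDj
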